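/- Let V be a real vector space and Z ⊆ V a convex subset. Let D : Z × Z → [0,1] be a metric-like loss with constant C ≥ 1 such that for every z ∈ Z the map w ↦ D(w, z) is convex on Z. Let X be a set, F a nonempty finite set of functions X → Z, and let T ≥ 1, N ≥ 1 be integers and β ≥ 0 a real. Then there exists a family of maps A_1,…,A_T, where A_t assigns to each pair consisting of a covariate sequence (x^(1),…,x^(t−1)) in X and an estimator sequence (f̂^(1),…,f̂^(t)) of functions X → Z a finitely supported probability distribution μ^(t) over functions X → Z, such that: for every f* ∈ F and every sequences x^(1),…,x^(T) ∈ X and f̂^(1),…,f̂^(T) : X → Z satisfying the offline estimation guarantee with parameter β relative to f* (for every t, ∑_{s=1}^{t−1} D(f̂^(t)(x^(s)), f*(x^(s))) ≤ β), the resulting predictions satisfy ∑_{t=1}^{T} E_{f ∼ μ^(t)}[ D(f(x^(t)), f*(x^(t))) ] ≤ 3C·(N + βT/N) + 2C·N·log|F|, where log denotes the natural logarithm. -/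

import Mathlib

open Finset Real

lemma exp_neg_le_quad {x : ℝ} (hx : 0 ≤ x) : Real.exp (-x) ≤ 1 - x + x ^ 2 / 2 := by
  have h1 : 1 + x + x ^ 2 / 2 ≤ Real.exp x := by
    have := Real.sum_le_exp_of_nonneg hx 3
    simp [Finset.sum_range_succ, Nat.factorial] at this
    nlinarith [this]
  have hpos : (0:ℝ) < 1 + x + x ^ 2 / 2 := by nlinarith
  have h2 : Real.exp (-x) ≤ 1 / (1 + x + x ^ 2 / 2) := by
    rw [Real.exp_neg, inv_eq_one_div]
    exact one_div_le_one_div_of_le hpos h1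
  refine h2.trans ?_
  rw [div_le_iff₀ hpos]
  nlinarith [sq_nonneg x, sq_nonneg (x^2)]

lemma hedge_blocks {α : Type*} (F : Finset α) (hF : F.Nonempty) {fstar : α} (hfs : fstar ∈ F)
    {Nr : ℝ} (hNr : 1 ≤ Nr) (K : ℕ) (lam : ℕ → α → ℝ)
    (h0 : ∀ b, ∀ f ∈ F, 0 ≤ lam b f) (h1 : ∀ b, ∀ f ∈ F, lam b f ≤ Nr) :
    ∑ b ∈ Finset.range K, ∑ f ∈ F,
        (Real.exp (-(1/Nr) * ∑ j ∈ Finset.range b, lam j f) /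
          ∑ g ∈ F, Real.exp (-(1/Nr) * ∑ j ∈ Finset.range b, lam j g)) * lam b f
      ≤ 2 * ∑ b ∈ Finset.range K, lam b fstar + 2 * Nr * Real.log F.card := by
  have hNr0 : (0:ℝ) < Nr := lt_of_lt_of_le one_pos hNr
  set η : ℝ := 1 / Nr with hηdef
  have hη0 : 0 < η := by positivity
  have hηN : η * Nr = 1 := by rw [hηdef]; field_simp
  set W : ℕ → ℝ := fun b => ∑ f ∈ F, Real.exp (-η * ∑ j ∈ Finset.range b, lam j f) with hW
  have hWpos : ∀ b, 0 < W b :=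
    fun b => Finset.sum_pos (fun f _ => Real.exp_pos _) hF
  set Ab : ℕ → ℝ := fun b => ∑ f ∈ F,
      (Real.exp (-η * ∑ j ∈ Finset.range b, lam j f) / W b) * lam b f with hAb
  have step : ∀ b, W (b+1) ≤ W b * Real.exp (-(η/2) * Ab b) := by
    intro b
    have e1 : W (b+1) ≤ ∑ f ∈ F,
        Real.exp (-η * ∑ j ∈ Finset.range b, lam j f) * (1 - (η/2) * lam b f) := by
      apply Finset.sum_le_sum
      intro f hf
      rw [Finset.sum_range_succ, mul_add, Real.exp_add]
      apply mul_le_mul_of_nonneg_left _ (le_of_lt (Real.exp_pos _))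
      have hl0 : 0 ≤ η * lam b f := mul_nonneg hη0.le (h0 b f hf)
      have hl1 : η * lam b f ≤ 1 := by
        calc η * lam b f ≤ η * Nr := mul_le_mul_of_nonneg_left (h1 b f hf) hη0.le
        _ = 1 := hηN
      have h := exp_neg_le_quad hl0
      rw [show -(η * lam b f) = -η * lam b f by ring] at h
      refine h.trans ?_
      nlinarith [hl0, hl1]
    have hWA : W b * Ab b = ∑ f ∈ F, Real.exp (-η * ∑ j ∈ Finset.range b, lam j f) * lam b f := by
      rw [hAb]
      rw [Finset.mul_sum]
      apply Finset.sum_congr rfl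
      intro f hf
      field_simp
      exact mul_div_cancel_left₀ _ (hWpos b).ne'
    have e2 : (∑ f ∈ F, Real.exp (-η * ∑ j ∈ Finset.range b, lam j f) * (1 - (η/2) * lam b f))
        = W b - (η/2) * (W b * Ab b) := by
      rw [hWA, hW]
      simp only []
      rw [Finset.mul_sum, ← Finset.sum_sub_distrib]
      apply Finset.sum_congr rfl
      intro f hf
      ring
    have e3 : W b * (1 - (η/2) * Ab b) ≤ W b * Real.exp (-(η/2) * Ab b) := by
      apply mul_le_mul_of_nonneg_left _ (hWpos b).le
      have := Real.add_one_le_exp (-(η/2) * Ab b)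
      linarith
    calc W (b+1) ≤ _ := e1
    _ = W b - (η/2) * (W b * Ab b) := e2
    _ = W b * (1 - (η/2) * Ab b) := by ring
    _ ≤ _ := e3
  have chain : ∀ M, W M ≤ W 0 * Real.exp (-(η/2) * ∑ b ∈ Finset.range M, Ab b) := by
    intro M
    induction M with
    | zero => simp
    | succ M ih =>
      calc W (M+1) ≤ W M * Real.exp (-(η/2) * Ab M) := step M
      _ ≤ (W 0 * Real.exp (-(η/2) * ∑ b ∈ Finset.range M, Ab b)) *
            Real.exp (-(η/2) * Ab M) :=
          mul_le_mul_of_nonneg_right ih (Real.exp_pos _).le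
      _ = W 0 * Real.exp (-(η/2) * ∑ b ∈ Finset.range (M+1), Ab b) := by
          rw [mul_assoc, ← Real.exp_add, Finset.sum_range_succ]
          ring_nf
  have hW0 : W 0 = (F.card : ℝ) := by simp [hW]
  have lower : Real.exp (-η * ∑ b ∈ Finset.range K, lam b fstar) ≤ W K := by
    have h : ∀ f ∈ F, (0:ℝ) ≤ Real.exp (-η * ∑ j ∈ Finset.range K, lam j f) :=
      fun f _ => (Real.exp_pos _).le
    exact Finset.single_le_sum h hfs
  have hcard : (0:ℝ) < F.card := by
    exact_mod_cast Finset.card_pos.mpr hF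
  have key : Real.exp (-η * ∑ b ∈ Finset.range K, lam b fstar)
      ≤ (F.card : ℝ) * Real.exp (-(η/2) * ∑ b ∈ Finset.range K, Ab b) := by
    calc _ ≤ W K := lower
    _ ≤ W 0 * Real.exp (-(η/2) * ∑ b ∈ Finset.range K, Ab b) := chain K
    _ = _ := by rw [hW0]
  have logkey : -η * ∑ b ∈ Finset.range K, lam b fstar
      ≤ Real.log (F.card) + (-(η/2) * ∑ b ∈ Finset.range K, Ab b) := by
    have h := Real.log_le_log (Real.exp_pos _) key
    rwa [Real.log_exp, Real.log_mul (ne_of_gt hcard) (Real.exp_ne_zero _),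
      Real.log_exp] at h
  have goal_eq : (∑ b ∈ Finset.range K, ∑ f ∈ F,
      (Real.exp (-(1/Nr) * ∑ j ∈ Finset.range b, lam j f) /
        ∑ g ∈ F, Real.exp (-(1/Nr) * ∑ j ∈ Finset.range b, lam j g)) * lam b f)
      = ∑ b ∈ Finset.range K, Ab b := rfl
  rw [goal_eq]
  set SA := ∑ b ∈ Finset.range K, Ab b with hSA
  set SL := ∑ b ∈ Finset.range K, lam b fstar with hSL
  have h3 : (η/2) * SA ≤ Real.log F.card + η * SL := by linarith [logkey]
  have h4 : Nr * ((η/2)*SA) ≤ Nr * (Real.log F.card + η*SL) :=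
    mul_le_mul_of_nonneg_left h3 hNr0.le
  have h5 : Nr * ((η/2)*SA) = SA/2 := by rw [hηdef]; field_simp
  have h6 : Nr * (Real.log F.card + η*SL) = Nr * Real.log F.card + SL := by
    rw [hηdef]; field_simp
  rw [h5, h6] at h4
  linarith

lemma sum_Ioc_blocks {M : Type*} [AddCommMonoid M] (g : ℕ → M) (N T K : ℕ) :
    ∑ b ∈ Finset.range K, ∑ t ∈ Finset.Ioc (min (b*N) T) (min ((b+1)*N) T), g t
      = ∑ t ∈ Finset.Ioc 0 (min (K*N) T), g t := by
  induction K with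
  | zero => simp
  | succ K ih =>
    rw [Finset.sum_range_succ, ih]
    exact Finset.sum_Ioc_consecutive g (Nat.zero_le _)
      (min_le_min (Nat.mul_le_mul_right _ (Nat.le_succ _)) le_rfl)

private lemma idxm_lt {N t s : ℕ} (hs : s ∈ Finset.Ioc 0 ((t-1)/N * N)) :
    s - 1 < t - 1 ∧ (s-1)/N * N + N < t := by
  simp only [Finset.mem_Ioc] at hs
  obtain ⟨hs0, hs1⟩ := hs
  have hbN : (t-1)/N * N ≤ t - 1 := Nat.div_mul_le_self _ _
  have hN : 0 < N := by
    rcases Nat.eq_zero_or_pos N with h | h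
    · subst h; simp at hs1; omega
    · exact h
  refine ⟨by omega, ?_⟩
  have hdiv : (s-1)/N < (t-1)/N := by
    rw [Nat.div_lt_iff_lt_mul hN]; omega
  have h2 : ((s-1)/N + 1) * N ≤ (t-1)/N * N := Nat.mul_le_mul_right _ hdiv
  rw [add_mul, one_mul] at h2
  omega

noncomputable def ewL {V X : Type*} (D : V → V → ℝ) (N : ℕ) (t : ℕ) (c : Fin (t-1) → X)
    (e : Fin t → (X → V)) (f : X → V) : ℝ :=
  ∑ s ∈ (Finset.Ioc 0 ((t-1)/N * N)).attach,
    D (f (c ⟨s.1 - 1, (idxm_lt s.2).1⟩))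
      (e ⟨(s.1-1)/N * N + N, (idxm_lt s.2).2⟩ (c ⟨s.1 - 1, (idxm_lt s.2).1⟩))

noncomputable def ewA {V X : Type*} (D : V → V → ℝ) (F : Finset (X → V)) (N : ℕ) (t : ℕ)
    (c : Fin (t-1) → X) (e : Fin t → (X → V)) : (X → V) →₀ ℝ :=
  haveI := Classical.decEq (X → V)
  Finsupp.onFinset F
    (fun f => if f ∈ F then Real.exp (-(1/(N:ℝ)) * ewL D N t c e f) /
      (∑ g ∈ F, Real.exp (-(1/(N:ℝ)) * ewL D N t c e g)) else 0)
    (fun f hf => by by_contra h; simp [h] at hf)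

lemma ewA_nonneg {V X : Type*} (D : V → V → ℝ) (F : Finset (X → V)) (N t : ℕ)
    (c : Fin (t-1) → X) (e : Fin t → (X → V)) (g : X → V) : 0 ≤ ewA D F N t c e g := by
  classical
  show (0:ℝ) ≤ if g ∈ F then _ / _ else 0
  split
  · apply div_nonneg (Real.exp_pos _).le
    exact Finset.sum_nonneg fun _ _ => (Real.exp_pos _).le
  · exact le_refl _

lemma ewA_sum_mul {V X : Type*} (D : V → V → ℝ) (F : Finset (X → V)) (N t : ℕ)
    (c : Fin (t-1) → X) (e : Fin t → (X → V)) (r : (X → V) → ℝ) :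
    (ewA D F N t c e).sum (fun g p => p * r g)
      = ∑ f ∈ F, (Real.exp (-(1/(N:ℝ)) * ewL D N t c e f) /
          (∑ g ∈ F, Real.exp (-(1/(N:ℝ)) * ewL D N t c e g))) * r f := by
  classical
  rw [ewA, Finsupp.onFinset_sum _ (fun a => by simp)]
  refine Finset.sum_congr rfl fun f hf => by rw [if_pos hf]

lemma ewA_sum_one {V X : Type*} (D : V → V → ℝ) (F : Finset (X → V)) (hF : F.Nonempty)
    (N t : ℕ) (c : Fin (t-1) → X) (e : Fin t → (X → V)) :
    (ewA D F N t c e).sum (fun _ p => p) = 1 := by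
  classical
  rw [show (fun (_ : X → V) (p:ℝ) => p) = (fun g p => p * (fun _ => (1:ℝ)) g) by funext; simp]
  rw [ewA_sum_mul]
  have hW : 0 < ∑ g ∈ F, Real.exp (-(1/(N:ℝ)) * ewL D N t c e g) :=
    Finset.sum_pos (fun _ _ => Real.exp_pos _) hF
  simp only [mul_one]
  rw [← Finset.sum_div, div_self (ne_of_gt hW)]

lemma ewA_support {V X : Type*} (D : V → V → ℝ) (F : Finset (X → V)) (N t : ℕ)
    (c : Fin (t-1) → X) (e : Fin t → (X → V)) :
    (ewA D F N t c e).support ⊆ F := Finsupp.support_onFinset_subset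

lemma ewL_eval {V X : Type*} (D : V → V → ℝ) (N t : ℕ) (x : ℕ → X) (fhat : ℕ → X → V)
    (f : X → V) :
    ewL D N t (fun s : Fin (t-1) => x (s.1 + 1)) (fun s : Fin t => fhat (s.1 + 1)) f
      = ∑ s ∈ Finset.Ioc 0 ((t-1)/N * N),
          D (f (x s)) (fhat ((s-1)/N * N + N + 1) (x s)) := by
  rw [ewL, ← Finset.sum_attach (Finset.Ioc 0 ((t-1)/N*N))
    (fun s => D (f (x s)) (fhat ((s-1)/N*N+N+1) (x s)))]
  refine Finset.sum_congr rfl fun s _ => ?_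
  have hs0 : 0 < s.1 := (Finset.mem_Ioc.mp s.2).1
  have h1 : s.1 - 1 + 1 = s.1 := by omega
  simp only [h1]


lemma final_arith_main {C Nr Tr Kr β lg E S : ℝ} (hC : 1 ≤ C) (hNr : 1 ≤ Nr) (hβ : 0 ≤ β)
    (hβN : β ≤ Nr) (hKr : Kr * Nr ≤ Tr + Nr - 1) (hlg : 0 ≤ lg) (hE0 : 0 ≤ E)
    (hE : E ≤ Kr * β + 1) (hS : S ≤ C * (2*E + 2*Nr*lg) + C*E) :
    S ≤ 3*C*(Nr + β*Tr/Nr) + 2*C*Nr*lg := by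
  have hNr0 : (0:ℝ) < Nr := by linarith
  have hQ : (β * Tr / Nr) * Nr = β * Tr := div_mul_cancel₀ _ (ne_of_gt hNr0)
  have hC0 : (0:ℝ) ≤ C := by linarith
  have key : Kr * β + 1 ≤ Nr + β * Tr / Nr := by
    nlinarith [mul_le_mul_of_nonneg_right hKr hβ,
      mul_le_mul_of_nonneg_right hβN (by linarith : (0:ℝ) ≤ Nr - 1), hQ, hNr0]
  nlinarith [mul_le_mul_of_nonneg_left key (by linarith : (0:ℝ) ≤ 3*C), hE, hC0, hlg, hE0,
    mul_le_mul_of_nonneg_left hE (by linarith : (0:ℝ) ≤ 3*C)]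

lemma final_arith_triv {C Nr Tr β lg S : ℝ} (hC : 1 ≤ C) (hNr : 1 ≤ Nr) (hβN : Nr < β)
    (hT : 1 ≤ Tr) (hlg : 0 ≤ lg) (hS : S ≤ Tr) :
    S ≤ 3*C*(Nr + β*Tr/Nr) + 2*C*Nr*lg := by
  have hNr0 : (0:ℝ) < Nr := by linarith
  have hQ : (β * Tr / Nr) * Nr = β * Tr := div_mul_cancel₀ _ (ne_of_gt hNr0)
  have hQT : Tr ≤ β * Tr / Nr := by
    have h1 : Tr * Nr ≤ (β * Tr / Nr) * Nr := by rw [hQ]; nlinarith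
    exact le_of_mul_le_mul_right h1 hNr0
  have h2 : (0:ℝ) ≤ 2*C*Nr*lg := by positivity
  nlinarith [mul_le_mul_of_nonneg_right hC (by linarith : (0:ℝ) ≤ Nr + β*Tr/Nr), h2, hQT]

/-- Oracle-efficient online estimation for finite classes via delayed online
learning: for a convex `Z`, a metric-like loss `D` with constant `C` that is convex in its
first argument, a finite class `F` of functions into `Z`, a horizon `T`, a delay `N`, and an
offline estimation parameter `β`, there is a family of maps `A t` (taking the past covariates
`x^(1),…,x^(t−1)` and the estimators `f̂^(1),…,f̂^(t)`, and not depending on the target) that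
produce finitely supported probability distributions over functions `X → Z` such that for
every target `f* ∈ F` and every data satisfying the offline guarantee with parameter `β`, the
online estimation error is at most `3C(N + βT/N) + 2CN log|F|`. -/
theorem oracle_efficient_via_delayed_ol {V : Type*} [AddCommGroup V] [Module ℝ V]
    (Z : Set V) (hZconv : Convex ℝ Z)
    (D : V → V → ℝ) (C : ℝ) (hC : 1 ≤ C)
    (hD0 : ∀ z₁ ∈ Z, ∀ z₂ ∈ Z, 0 ≤ D z₁ z₂)
    (hD1 : ∀ z₁ ∈ Z, ∀ z₂ ∈ Z, D z₁ z₂ ≤ 1)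
    (hDsymm : ∀ z₁ ∈ Z, ∀ z₂ ∈ Z, D z₁ z₂ = D z₂ z₁)
    (hDdiag : ∀ z ∈ Z, D z z = 0)
    (hDtri : ∀ z₁ ∈ Z, ∀ z₂ ∈ Z, ∀ z₃ ∈ Z, D z₁ z₂ ≤ C * (D z₁ z₃ + D z₃ z₂))
    (hDconv : ∀ z ∈ Z, ConvexOn ℝ Z (fun w => D w z))
    {X : Type*} (F : Finset (X → V)) (hF : F.Nonempty)
    (hFZ : ∀ f ∈ F, ∀ xx, f xx ∈ Z)
    (T N : ℕ) (hT : 1 ≤ T) (hN : 1 ≤ N) (β : ℝ) (hβ : 0 ≤ β) :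
    ∃ A : (t : ℕ) → (Fin (t - 1) → X) → (Fin t → (X → V)) → ((X → V) →₀ ℝ),
      (∀ t c e, (∀ g, 0 ≤ A t c e g) ∧ ((A t c e).sum fun _ p => p) = 1 ∧
        ∀ g ∈ (A t c e).support, ∀ xx, g xx ∈ Z) ∧
      ∀ fstar ∈ F, ∀ (x : ℕ → X) (fhat : ℕ → X → V),
        (∀ t xx, fhat t xx ∈ Z) →
        (∀ t ∈ Finset.Icc 1 T,
          ∑ s ∈ Finset.Icc 1 (t - 1), D (fhat t (x s)) (fstar (x s)) ≤ β) →
        ∑ t ∈ Finset.Icc 1 T,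
          ((A t (fun s => x (s.val + 1)) (fun s => fhat (s.val + 1))).sum
            fun g p => p * D (g (x t)) (fstar (x t)))
          ≤ 3 * C * ((N : ℝ) + β * T / N) + 2 * C * N * Real.log (F.card) := by
  classical
  have hNr1 : (1:ℝ) ≤ (N:ℝ) := by exact_mod_cast hN
  have hNr0 : (0:ℝ) < (N:ℝ) := by linarith
  refine ⟨ewA D F N, fun t c e =>
    ⟨ewA_nonneg D F N t c e, ewA_sum_one D F hF N t c e,
      fun g hg => hFZ g (ewA_support D F N t c e hg)⟩, ?_⟩
  intro fstar hfs x fhat hfhatZ hoff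
  set K : ℕ := (T-1)/N + 1 with hK
  set mm : ℕ → ℕ := fun b => min ((b+1)*N + 1) T with hmm
  set ℓ : ℕ → (X → V) → ℝ := fun t f => D (f (x t)) (fhat (mm ((t-1)/N)) (x t)) with hℓ
  set lam : ℕ → (X → V) → ℝ :=
    fun b f => ∑ t ∈ Finset.Ioc (b*N) (min ((b+1)*N) T), ℓ t f with hlam
  set ee : ℕ → ℝ := fun t => D (fhat (mm ((t-1)/N)) (x t)) (fstar (x t)) with hee
  set p : ℕ → (X → V) → ℝ := fun b f =>
    Real.exp (-(1/(N:ℝ)) * ∑ j ∈ Finset.range b, lam j f) /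
      ∑ g ∈ F, Real.exp (-(1/(N:ℝ)) * ∑ j ∈ Finset.range b, lam j g) with hp
  -- basic facts
  have hN0 : 0 < N := hN
  have hdq : ((T-1)/N)*N ≤ T - 1 := Nat.div_mul_le_self _ _
  have hKNe : K*N = ((T-1)/N)*N + N := by rw [hK, add_mul, one_mul]
  have hTKN : T - 1 < K * N := by
    rw [hK]
    exact (Nat.div_lt_iff_lt_mul hN0).mp (Nat.lt_succ_self _)
  have hKN : T ≤ K * N := by omega
  have hbK : ∀ b, b < K → b*N ≤ T - 1 := by
    intro b hb
    have h1 : b ≤ (T-1)/N := by omega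
    calc b*N ≤ ((T-1)/N)*N := Nat.mul_le_mul_right _ h1
    _ ≤ T - 1 := Nat.div_mul_le_self _ _
  have hblock : ∀ b, ∀ t ∈ Finset.Ioc (b*N) (min ((b+1)*N) T), (t-1)/N = b := by
    intro b t ht
    rw [Finset.mem_Ioc] at ht
    have h2 : t ≤ (b+1)*N := le_trans ht.2 (min_le_left _ _)
    have h3 : (b+1)*N = b*N + N := by rw [add_mul, one_mul]
    exact Nat.div_eq_of_lt_le (by omega) (by omega)
  have hXZ : ∀ t, fstar (x t) ∈ Z := fun t => hFZ fstar hfs _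
  -- weights
  have hWpos : ∀ b, (0:ℝ) <
      ∑ g ∈ F, Real.exp (-(1/(N:ℝ)) * ∑ j ∈ Finset.range b, lam j g) :=
    fun b => Finset.sum_pos (fun _ _ => Real.exp_pos _) hF
  have hp0 : ∀ b f, 0 ≤ p b f :=
    fun b f => div_nonneg (Real.exp_pos _).le (hWpos b).le
  have hp1 : ∀ b, ∑ f ∈ F, p b f = 1 := by
    intro b
    rw [hp]
    rw [← Finset.sum_div, div_self (ne_of_gt (hWpos b))]
  -- regrouping of sums over [1,T] into blocks
  have hregroup : ∀ gg : ℕ → ℝ, ∑ t ∈ Finset.Icc 1 T, gg t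
      = ∑ b ∈ Finset.range K, ∑ t ∈ Finset.Ioc (b*N) (min ((b+1)*N) T), gg t := by
    intro gg
    have h := sum_Ioc_blocks gg N T K
    rw [min_eq_right hKN] at h
    rw [show Finset.Icc 1 T = Finset.Ioc 0 T from Finset.Icc_add_one_left_eq_Ioc 0 T, ← h]
    refine Finset.sum_congr rfl fun b hb => ?_
    rw [min_eq_left (le_trans (hbK b (Finset.mem_range.mp hb)) (by omega))]
  -- step i : identify the algorithm's distribution with p
  have hLc : ∀ t ∈ Finset.Icc 1 T, ∀ f : X → V,
      ewL D N t (fun s : Fin (t-1) => x (s.1+1)) (fun s : Fin t => fhat (s.1+1)) f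
        = ∑ j ∈ Finset.range ((t-1)/N), lam j f := by
    intro t ht f
    rw [Finset.mem_Icc] at ht
    rw [ewL_eval]
    have hbT : ((t-1)/N)*N ≤ T - 1 := le_trans (Nat.div_mul_le_self _ _) (by omega)
    have hpart := sum_Ioc_blocks
      (fun s => D (f (x s)) (fhat ((s-1)/N*N+N+1) (x s))) N (((t-1)/N)*N) ((t-1)/N)
    rw [min_self] at hpart
    rw [← hpart]
    refine Finset.sum_congr rfl fun j hj => ?_
    have hjb : j < (t-1)/N := Finset.mem_range.mp hj
    have h2 : (j+1)*N ≤ ((t-1)/N)*N := Nat.mul_le_mul_right _ hjb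
    rw [min_eq_left (Nat.mul_le_mul_right _ hjb.le), min_eq_left h2]
    have h4 : min ((j+1)*N) T = (j+1)*N := min_eq_left (by omega)
    simp only [hlam, hℓ, hmm]
    rw [h4]
    refine Finset.sum_congr rfl fun s hs => ?_
    rw [Finset.mem_Ioc] at hs
    have h5 : (j+1)*N = j*N + N := by rw [add_mul, one_mul]
    have hsj : (s-1)/N = j := Nat.div_eq_of_lt_le (by omega) (by omega)
    rw [hsj]
    have h6 : min ((j+1)*N+1) T = (j+1)*N+1 := min_eq_left (by omega)
    rw [h6]
    have h7 : j*N + N + 1 = (j+1)*N+1 := by rw [add_mul, one_mul]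
    rw [h7]
  have step1 : ∑ t ∈ Finset.Icc 1 T,
      ((ewA D F N t (fun s => x (s.1 + 1)) (fun s => fhat (s.1 + 1))).sum
        fun g q => q * D (g (x t)) (fstar (x t)))
      = ∑ t ∈ Finset.Icc 1 T, ∑ f ∈ F, p ((t-1)/N) f * D (f (x t)) (fstar (x t)) := by
    refine Finset.sum_congr rfl fun t ht => ?_
    rw [ewA_sum_mul]
    refine Finset.sum_congr rfl fun f hf => ?_
    simp only [hLc t ht, hp]
  -- step ii : triangle inequality pointwise
  have step2 : ∀ t ∈ Finset.Icc 1 T,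
      ∑ f ∈ F, p ((t-1)/N) f * D (f (x t)) (fstar (x t))
        ≤ C * (∑ f ∈ F, p ((t-1)/N) f * ℓ t f) + C * ee t := by
    intro t ht
    have hterm : ∀ f ∈ F, p ((t-1)/N) f * D (f (x t)) (fstar (x t))
        ≤ C * (p ((t-1)/N) f * ℓ t f) + p ((t-1)/N) f * (C * ee t) := by
      intro f hf
      have htri := hDtri (f (x t)) (hFZ f hf _) (fstar (x t)) (hXZ t)
        (fhat (mm ((t-1)/N)) (x t)) (hfhatZ _ _)
      calc p ((t-1)/N) f * D (f (x t)) (fstar (x t))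
          ≤ p ((t-1)/N) f * (C * (ℓ t f + ee t)) :=
            mul_le_mul_of_nonneg_left htri (hp0 _ f)
      _ = C * (p ((t-1)/N) f * ℓ t f) + p ((t-1)/N) f * (C * ee t) := by ring
    calc ∑ f ∈ F, p ((t-1)/N) f * D (f (x t)) (fstar (x t))
        ≤ ∑ f ∈ F, (C * (p ((t-1)/N) f * ℓ t f) + p ((t-1)/N) f * (C * ee t)) :=
          Finset.sum_le_sum hterm
    _ = C * (∑ f ∈ F, p ((t-1)/N) f * ℓ t f) + (∑ f ∈ F, p ((t-1)/N) f) * (C * ee t) := by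
        rw [Finset.sum_add_distrib, Finset.mul_sum, Finset.sum_mul]
    _ = C * (∑ f ∈ F, p ((t-1)/N) f * ℓ t f) + C * ee t := by rw [hp1]; ring
  -- step iii : regroup algorithm loss into blocks
  have step3 : ∑ t ∈ Finset.Icc 1 T, ∑ f ∈ F, p ((t-1)/N) f * ℓ t f
      = ∑ b ∈ Finset.range K, ∑ f ∈ F, p b f * lam b f := by
    rw [hregroup (fun t => ∑ f ∈ F, p ((t-1)/N) f * ℓ t f)]
    refine Finset.sum_congr rfl fun b hb => ?_
    rw [Finset.sum_comm]
    refine Finset.sum_congr rfl fun f hf => ?_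
    rw [hlam]
    simp only
    rw [Finset.mul_sum]
    refine Finset.sum_congr rfl fun t ht => ?_
    rw [hblock b t ht]
  -- the offline-guarantee bound on the error terms
  have hEbound : ∑ t ∈ Finset.Icc 1 T, ee t ≤ (K:ℝ) * β + 1 := by
    rw [hregroup ee]
    have hblockE : ∀ b ∈ Finset.range K,
        ∑ t ∈ Finset.Ioc (b*N) (min ((b+1)*N) T), ee t
          ≤ β + (if T ≤ (b+1)*N then (1:ℝ) else 0) := by
      intro b hb
      have hbT : b*N ≤ T - 1 := hbK b (Finset.mem_range.mp hb)
      by_cases hcase : T ≤ (b+1)*N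
      · rw [if_pos hcase]
        have hmin2 : min ((b+1)*N) T = T := min_eq_right hcase
        rw [hmin2]
        have hsummand : ∀ t ∈ Finset.Ioc (b*N) T,
            ee t = D (fhat T (x t)) (fstar (x t)) := by
          intro t ht
          have hb' : (t-1)/N = b := hblock b t (by rw [hmin2]; exact ht)
          simp only [hee, hb', hmm]
          rw [min_eq_right (by omega : T ≤ (b+1)*N+1)]
        rw [Finset.sum_congr rfl hsummand]
        have hTmem : T ∈ Finset.Ioc (b*N) T := Finset.mem_Ioc.mpr ⟨by omega, le_rfl⟩
        rw [← Finset.sum_erase_add _ _ hTmem]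
        have hsub : (Finset.Ioc (b*N) T).erase T ⊆ Finset.Icc 1 (T-1) := by
          intro u hu
          rw [Finset.mem_erase, Finset.mem_Ioc] at hu
          rw [Finset.mem_Icc]
          omega
        have hle1 : ∑ t ∈ (Finset.Ioc (b*N) T).erase T, D (fhat T (x t)) (fstar (x t))
            ≤ β := by
          calc _ ≤ ∑ t ∈ Finset.Icc 1 (T-1), D (fhat T (x t)) (fstar (x t)) :=
                Finset.sum_le_sum_of_subset_of_nonneg hsub
                  (fun i _ _ => hD0 _ (hfhatZ _ _) _ (hXZ i))
          _ ≤ β := hoff T (Finset.mem_Icc.mpr ⟨hT, le_rfl⟩)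
        have hle2 : D (fhat T (x T)) (fstar (x T)) ≤ 1 := hD1 _ (hfhatZ _ _) _ (hXZ T)
        linarith
      · rw [if_neg hcase, add_zero]
        push_neg at hcase
        have hmin2 : min ((b+1)*N) T = (b+1)*N := min_eq_left (by omega)
        rw [hmin2]
        have hsummand : ∀ t ∈ Finset.Ioc (b*N) ((b+1)*N),
            ee t = D (fhat ((b+1)*N+1) (x t)) (fstar (x t)) := by
          intro t ht
          have hb' : (t-1)/N = b := hblock b t (by rw [hmin2]; exact ht)
          simp only [hee, hb', hmm]
          rw [min_eq_left (by omega : (b+1)*N+1 ≤ T)]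
        rw [Finset.sum_congr rfl hsummand]
        have hsub : Finset.Ioc (b*N) ((b+1)*N) ⊆ Finset.Icc 1 (((b+1)*N+1) - 1) := by
          intro u hu
          rw [Finset.mem_Ioc] at hu
          rw [Finset.mem_Icc]
          omega
        calc ∑ t ∈ Finset.Ioc (b*N) ((b+1)*N), D (fhat ((b+1)*N+1) (x t)) (fstar (x t))
            ≤ ∑ t ∈ Finset.Icc 1 (((b+1)*N+1) - 1), D (fhat ((b+1)*N+1) (x t)) (fstar (x t)) :=
              Finset.sum_le_sum_of_subset_of_nonneg hsub
                (fun i _ _ => hD0 _ (hfhatZ _ _) _ (hXZ i))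
        _ ≤ β := hoff _ (Finset.mem_Icc.mpr ⟨by omega, by omega⟩)
    have hind : ∑ b ∈ Finset.range K, (if T ≤ (b+1)*N then (1:ℝ) else 0) ≤ 1 := by
      have hle : ∀ b ∈ Finset.range K,
          (if T ≤ (b+1)*N then (1:ℝ) else 0) ≤ (if b = K-1 then (1:ℝ) else 0) := by
        intro b hb
        rw [Finset.mem_range] at hb
        by_cases h : T ≤ (b+1)*N
        · rw [if_pos h]
          have hbK1 : b = K - 1 := by
            by_contra hne
            have hb2 : b + 1 ≤ K - 1 := by omega
            have h8 : (b+1)*N ≤ (K-1)*N := Nat.mul_le_mul_right _ hb2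
            have h9 : (K-1)*N ≤ T - 1 := by
              have h10 : K - 1 = (T-1)/N := by omega
              rw [h10]
              exact Nat.div_mul_le_self _ _
            omega
          rw [if_pos hbK1]
        · rw [if_neg h]
          split <;> norm_num
      calc ∑ b ∈ Finset.range K, (if T ≤ (b+1)*N then (1:ℝ) else 0)
          ≤ ∑ b ∈ Finset.range K, (if b = K-1 then (1:ℝ) else 0) := Finset.sum_le_sum hle
      _ = 1 := by
          rw [Finset.sum_ite_eq' (Finset.range K) (K-1) (fun _ => (1:ℝ)),
            if_pos (Finset.mem_range.mpr (Nat.sub_lt (by rw [hK]; exact Nat.succ_pos _) one_pos))]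
    calc ∑ b ∈ Finset.range K, ∑ t ∈ Finset.Ioc (b*N) (min ((b+1)*N) T), ee t
        ≤ ∑ b ∈ Finset.range K, (β + (if T ≤ (b+1)*N then (1:ℝ) else 0)) :=
          Finset.sum_le_sum hblockE
    _ = (K:ℝ)*β + ∑ b ∈ Finset.range K, (if T ≤ (b+1)*N then (1:ℝ) else 0) := by
        rw [Finset.sum_add_distrib, Finset.sum_const, Finset.card_range, nsmul_eq_mul]
    _ ≤ (K:ℝ)*β + 1 := by linarith
  -- comparator loss equals error terms
  have hcomp : ∑ b ∈ Finset.range K, lam b fstar = ∑ t ∈ Finset.Icc 1 T, ee t := by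
    rw [hregroup ee]
    refine Finset.sum_congr rfl fun b hb => Finset.sum_congr rfl fun t ht => ?_
    exact hDsymm _ (hXZ t) _ (hfhatZ _ _)
  -- hedge bound
  have hlam0 : ∀ b, ∀ f ∈ F, 0 ≤ lam b f := by
    intro b f hf
    exact Finset.sum_nonneg fun t _ => hD0 _ (hFZ f hf _) _ (hfhatZ _ _)
  have hlam1 : ∀ b, ∀ f ∈ F, lam b f ≤ (N:ℝ) := by
    intro b f hf
    calc lam b f ≤ ∑ t ∈ Finset.Ioc (b*N) (min ((b+1)*N) T), (1:ℝ) :=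
          Finset.sum_le_sum fun t _ => hD1 _ (hFZ f hf _) _ (hfhatZ _ _)
    _ = ((Finset.Ioc (b*N) (min ((b+1)*N) T)).card : ℝ) := by
        rw [Finset.sum_const, nsmul_eq_mul, mul_one]
    _ ≤ (N:ℝ) := by
        have h1 : (Finset.Ioc (b*N) (min ((b+1)*N) T)).card ≤ N := by
          rw [Nat.card_Ioc]
          have h2 : min ((b+1)*N) T ≤ (b+1)*N := min_le_left _ _
          have h3 : (b+1)*N = b*N + N := by rw [add_mul, one_mul]
          omega
        exact_mod_cast h1
  have hedge : ∑ b ∈ Finset.range K, ∑ f ∈ F, p b f * lam b f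
      ≤ 2 * ∑ b ∈ Finset.range K, lam b fstar + 2 * (N:ℝ) * Real.log F.card :=
    hedge_blocks F hF hfs hNr1 K lam hlam0 hlam1
  have hlog : 0 ≤ Real.log F.card :=
    Real.log_nonneg (by exact_mod_cast Finset.one_le_card.mpr hF)
  -- put things together
  have hE0 : 0 ≤ ∑ t ∈ Finset.Icc 1 T, ee t :=
    Finset.sum_nonneg fun t _ => hD0 _ (hfhatZ _ _) _ (hXZ t)
  rw [step1]
  have hS : ∑ t ∈ Finset.Icc 1 T, ∑ f ∈ F, p ((t-1)/N) f * D (f (x t)) (fstar (x t))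
      ≤ C * (2 * ∑ t ∈ Finset.Icc 1 T, ee t + 2 * (N:ℝ) * Real.log F.card)
        + C * ∑ t ∈ Finset.Icc 1 T, ee t := by
    have hC0 : (0:ℝ) ≤ C := by linarith
    have h2 : ∑ t ∈ Finset.Icc 1 T, ∑ f ∈ F, p ((t-1)/N) f * D (f (x t)) (fstar (x t))
        ≤ C * (∑ b ∈ Finset.range K, ∑ f ∈ F, p b f * lam b f)
          + C * ∑ t ∈ Finset.Icc 1 T, ee t := by
      calc _ ≤ ∑ t ∈ Finset.Icc 1 T,
          (C * (∑ f ∈ F, p ((t-1)/N) f * ℓ t f) + C * ee t) := Finset.sum_le_sum step2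
      _ = C * (∑ t ∈ Finset.Icc 1 T, ∑ f ∈ F, p ((t-1)/N) f * ℓ t f)
          + C * ∑ t ∈ Finset.Icc 1 T, ee t := by
          rw [Finset.sum_add_distrib, ← Finset.mul_sum, ← Finset.mul_sum]
      _ = _ := by rw [step3]
    have h3 : C * (∑ b ∈ Finset.range K, ∑ f ∈ F, p b f * lam b f)
        ≤ C * (2 * ∑ t ∈ Finset.Icc 1 T, ee t + 2 * (N:ℝ) * Real.log F.card) := by
      apply mul_le_mul_of_nonneg_left _ hC0
      rw [← hcomp]
      exact hedge
    exact h2.trans (add_le_add_left h3 _)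
  by_cases hβN : β ≤ (N:ℝ)
  · have hKr : (K:ℝ) * N ≤ (T:ℝ) + N - 1 := by
      have h1 : K * N + 1 ≤ T + N := by omega
      have h3 : ((K*N+1 : ℕ):ℝ) ≤ ((T+N : ℕ):ℝ) := by exact_mod_cast h1
      push_cast at h3
      rw [hK]
      push_cast
      rw [hK] at h3; push_cast at h3
      linarith
    exact final_arith_main hC hNr1 hβ hβN hKr hlog hE0 hEbound hS
  · push_neg at hβN
    have hLT : ∑ t ∈ Finset.Icc 1 T, ∑ f ∈ F, p ((t-1)/N) f * D (f (x t)) (fstar (x t))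
        ≤ (T:ℝ) := by
      calc _ ≤ ∑ t ∈ Finset.Icc 1 T, (1:ℝ) := by
            refine Finset.sum_le_sum fun t ht => ?_
            calc ∑ f ∈ F, p ((t-1)/N) f * D (f (x t)) (fstar (x t))
                ≤ ∑ f ∈ F, p ((t-1)/N) f * 1 := by
                  refine Finset.sum_le_sum fun f hf => ?_
                  exact mul_le_mul_of_nonneg_left (hD1 _ (hFZ f hf _) _ (hXZ t)) (hp0 _ f)
            _ = 1 := by simp only [mul_one]; exact hp1 _
      _ = (T:ℝ) := by
          rw [Finset.sum_const, nsmul_eq_mul, mul_one, Nat.card_Icc]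
          norm_cast
    have hT0 : (1:ℝ) ≤ (T:ℝ) := by exact_mod_cast hT
    exact final_arith_triv hC hNr1 hβN hT0 hlog hLT
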